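/- (Harada-Sai Lemma) Let R be a ring and M_1 → M_2 → ... → M_s a sequence of R-homomorphisms f_1, ..., f_{s-1} such that (i) each M_i is indecomposable of finite length, (ii) no f_i is an isomorphism, and (iii) the composition f_{s-1}∘f_{s-2}∘...∘f_1 is non-zero. If the length ℓ_R(M_i) ≤ b for each i, then s ≤ 2^b − 1. -/

import Mathlib

open CategoryTheory TensorProduct

universe u v

noncomputable section

/-- For a local ring this is the maximal ideal (it is the Jacobson radical of `⊥`);
phrasing it via the Jacobson radical makes the definition available without an
`IsLocalRing` instance (e.g. for quotients of local rings). -/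
def maxIdl (R : Type u) [CommRing R] : Ideal R := (⊥ : Ideal R).jacobson

/-- The length of a module: the supremum of lengths of strictly increasing chains of
submodules, i.e. the Krull dimension of the lattice of submodules. -/
def modLength (R : Type u) [Ring R] (M : Type v) [AddCommGroup M] [Module R M] :
    WithBot ℕ∞ :=
  Order.krullDim (Submodule R M)

/-- The depth of a module over a local ring: the supremum of the lengths of
`M`-regular sequences contained in the maximal ideal. -/
def depthNat (R : Type u) [CommRing R] (M : Type v) [AddCommGroup M] [Module R M] : ℕ :=
  sSup {n : ℕ | ∃ rs : List R, rs.length = n ∧ (∀ r ∈ rs, r ∈ maxIdl R) ∧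
    RingTheory.Sequence.IsRegular M rs}

/-- A maximal Cohen-Macaulay (MCM) module: finitely generated with depth equal to the
Krull dimension of the ring. -/
def IsMCM (R : Type u) [CommRing R] (M : Type v) [AddCommGroup M] [Module R M] : Prop :=
  Module.Finite R M ∧ ((depthNat R M : ℕ∞) : WithBot ℕ∞) = ringKrullDim R

/-- A (local) ring is Cohen-Macaulay if its depth equals its Krull dimension. -/
def IsCMRing (R : Type u) [CommRing R] : Prop :=
  ((depthNat R R : ℕ∞) : WithBot ℕ∞) = ringKrullDim R

/-- An indecomposable module: nonzero, and not the internal direct sum of two nonzero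
submodules. -/
def Indec (R : Type u) [Ring R] (M : Type v) [AddCommGroup M] [Module R M] : Prop :=
  Nontrivial M ∧ ∀ N₁ N₂ : Submodule R M, IsCompl N₁ N₂ → N₁ = ⊥ ∨ N₂ = ⊥

/-- The Hilbert-Samuel function `n ↦ ℓ_R (M / mⁿM)` (with values in `ℤ`, for taking
finite differences). -/
def hsFun (R : Type u) [CommRing R] (M : Type v) [AddCommGroup M] [Module R M]
    (n : ℕ) : ℤ :=
  (((((modLength R (M ⧸ ((maxIdl R ^ n) • (⊤ : Submodule R M)))).unbotD 0).untopD 0 : ℕ) : ℤ))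

/-- Forward difference operator. -/
def fdiff (f : ℕ → ℤ) : ℕ → ℤ := fun n => f (n + 1) - f n

/-- Krull dimension of a ring, as a natural number. -/
def dimNat (R : Type u) [CommRing R] : ℕ := ((ringKrullDim R).unbotD 0).untopD 0

/-- The Hilbert-Samuel multiplicity `e(m, M)` of the maximal ideal on `M`, where
`d = dim R`: the eventually constant value of the `d`-th finite difference of the
Hilbert-Samuel function `n ↦ ℓ(M/mⁿM)`. -/
def eMult (R : Type u) [CommRing R] (M : Type v) [AddCommGroup M] [Module R M] : ℕ :=
  sSup {e : ℕ | ∀ᶠ n in Filter.atTop, fdiff^[dimNat R] (hsFun R M) n = (e : ℤ)}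

/-- A local ring has finite CM type if it has only finitely many indecomposable
maximal Cohen-Macaulay modules up to isomorphism. -/
def FiniteCMType (R : Type u) [CommRing R] : Prop :=
  ∃ S : Set (ModuleCat.{u} R), S.Finite ∧
    ∀ M : ModuleCat.{u} R, IsMCM R M → Indec R M → ∃ N ∈ S, Nonempty (M ≃ₗ[R] N)

/-- A local ring has bounded CM type if there is a bound on the multiplicities of the
indecomposable maximal Cohen-Macaulay modules. -/
def BoundedCMType (R : Type u) [CommRing R] : Prop :=
  ∃ B : ℕ, ∀ M : ModuleCat.{u} R, IsMCM R M → Indec R M → eMult R M ≤ B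

/-- A local ring has strongly unbounded CM type if there is an increasing sequence
`n₁ < n₂ < ⋯` of positive integers such that for every `i` there are infinitely many
pairwise non-isomorphic indecomposable MCM modules of multiplicity `nᵢ`. -/
def StronglyUnboundedCMType (R : Type u) [CommRing R] : Prop :=
  ∃ f : ℕ → ℕ, StrictMono f ∧ (∀ i, 0 < f i) ∧ ∀ i, ∃ M : ℕ → ModuleCat.{u} R,
    (∀ j, IsMCM R (M j) ∧ Indec R (M j) ∧ eMult R (M j) = f i) ∧
    ∀ j j', j ≠ j' → IsEmpty ((M j : Type u) ≃ₗ[R] (M j'))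


/-- The composite `f_{s-1} ∘ ⋯ ∘ f_1` of a chain of linear maps
`M 0 → M 1 → ⋯ → M s`. -/
def compChain (R : Type u) [Ring R] : ∀ {s : ℕ} (M : Fin (s + 1) → ModuleCat.{u} R),
    (∀ i : Fin s, (M i.castSucc : Type u) →ₗ[R] M i.succ) →
      ((M 0 : Type u) →ₗ[R] M (Fin.last s))
  | 0, _, _ => LinearMap.id
  | s + 1, M, f =>
      (f (Fin.last s)).comp (compChain R (fun i => M i.castSucc) (fun i => f i.castSucc))

section HaradaSaiAux

/-- Splitting a chain composite at an intermediate point. -/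
theorem compChain_split (R : Type u) [Ring R] (a : ℕ) :
    ∀ (c : ℕ) (M : Fin (a + c + 1) → ModuleCat.{u} R)
      (f : ∀ i : Fin (a + c), (M i.castSucc : Type u) →ₗ[R] M i.succ),
    compChain R M f =
      (compChain R (fun t : Fin (c+1) => M ⟨a + t.val, by omega⟩)
        (fun t : Fin c => f ⟨a + t.val, by omega⟩)).comp
      (compChain R (fun t : Fin (a+1) => M ⟨t.val, by omega⟩)
        (fun t : Fin a => f ⟨t.val, by omega⟩))
  | 0, M, f => rfl
  | c + 1, M, f => by
      have IH := compChain_split R a c (fun i => M i.castSucc) (fun i => f i.castSucc)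
      exact (congrArg (f (Fin.last (a+c))).comp IH).trans (LinearMap.comp_assoc _ _ _).symm

section bridge
variable {α : Type*} [Preorder α]

lemma krullDim_Iic (a : α) :
    Order.krullDim {x : α // x ≤ a} = (Order.height a : WithBot ℕ∞) := by
  apply le_antisymm
  · rw [Order.krullDim]
    apply iSup_le
    intro p
    have h1 : (p.map Subtype.val (fun _ _ h => h)).last ≤ a := (p.last).2
    have := Order.length_le_height h1
    exact_mod_cast this
  · obtain ⟨d, hd⟩ : ∃ d : ℕ∞, Order.krullDim {x : α // x ≤ a} = (d : WithBot ℕ∞) := by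
      have : Nonempty {x : α // x ≤ a} := ⟨⟨a, le_rfl⟩⟩
      rw [Order.krullDim_eq_iSup_length]
      exact ⟨_, rfl⟩
    rw [hd, WithBot.coe_le_coe]
    rw [Order.height_eq_iSup_last_eq]
    apply iSup₂_le
    intro p hp
    have hq : ∀ i, (p i : α) ≤ a := fun i => hp ▸ p.monotone (Fin.le_last i)
    let q : LTSeries {x : α // x ≤ a} :=
      ⟨p.length, fun i => ⟨p i, hq i⟩, fun i => p.step i⟩
    have := Order.LTSeries.length_le_krullDim q
    rw [hd] at this
    exact_mod_cast this

lemma krullDim_Ici (a : α) :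
    Order.krullDim {x : α // a ≤ x} = (Order.coheight a : WithBot ℕ∞) := by
  apply le_antisymm
  · rw [Order.krullDim]
    apply iSup_le
    intro p
    have h1 : a ≤ (p.map Subtype.val (fun _ _ h => h)).head := (p.head).2
    have := Order.length_le_coheight h1
    exact_mod_cast this
  · obtain ⟨d, hd⟩ : ∃ d : ℕ∞, Order.krullDim {x : α // a ≤ x} = (d : WithBot ℕ∞) := by
      have : Nonempty {x : α // a ≤ x} := ⟨⟨a, le_rfl⟩⟩
      rw [Order.krullDim_eq_iSup_length]
      exact ⟨_, rfl⟩
    rw [hd, WithBot.coe_le_coe]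
    rw [Order.coheight_eq_iSup_head_eq]
    apply iSup₂_le
    intro p hp
    have hq : ∀ i, a ≤ (p i : α) := fun i => hp ▸ p.monotone (Fin.zero_le i)
    let q : LTSeries {x : α // a ≤ x} :=
      ⟨p.length, fun i => ⟨p i, hq i⟩, fun i => p.step i⟩
    have := Order.LTSeries.length_le_krullDim q
    rw [hd] at this
    exact_mod_cast this

end bridge

section modules
variable {R : Type u} [Ring R] {A B : Type v} [AddCommGroup A] [Module R A]
  [AddCommGroup B] [Module R B]

lemma modLength_congr (e : A ≃ₗ[R] B) : modLength R A = modLength R B :=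
  Order.krullDim_eq_of_orderIso (Submodule.orderIsoMapComap e)

lemma modLength_submodule (N : Submodule R A) :
    modLength R N = (Order.height N : WithBot ℕ∞) := by
  rw [modLength, Order.krullDim_eq_of_orderIso (Submodule.MapSubtype.orderIso N)]
  exact krullDim_Iic N

lemma modLength_quotient (N : Submodule R A) :
    modLength R (A ⧸ N) = (Order.coheight N : WithBot ℕ∞) := by
  rw [modLength, Order.krullDim_eq_of_orderIso (Submodule.comapMkQRelIso N)]
  exact krullDim_Ici N

lemma height_range_le (φ : A →ₗ[R] B) :
    (Order.height (LinearMap.range φ) : WithBot ℕ∞) ≤ modLength R A := by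
  rw [← modLength_submodule, modLength_congr (LinearMap.quotKerEquivRange φ).symm,
    modLength_quotient]
  exact Order.coheight_le_krullDim _

lemma height_map_le (φ : A →ₗ[R] B) (N : Submodule R A) :
    Order.height (Submodule.map φ N) ≤ Order.height N := by
  have h1 : Submodule.map φ N = LinearMap.range (φ.comp N.subtype) := by
    rw [LinearMap.range_comp, Submodule.range_subtype]
  rw [h1, ← WithBot.coe_le_coe, ← modLength_submodule N]
  exact height_range_le _

lemma height_range_of_ker_ne_bot (φ : A →ₗ[R] B) (hker : LinearMap.ker φ ≠ ⊥) (c : ℕ)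
    (hA : modLength R A ≤ ((c + 1 : ℕ) : WithBot ℕ∞)) :
    Order.height (LinearMap.range φ) ≤ (c : ℕ∞) := by
  have hrange : (Order.height (LinearMap.range φ) : WithBot ℕ∞) =
      (Order.coheight (LinearMap.ker φ) : WithBot ℕ∞) := by
    rw [← modLength_submodule, modLength_congr (LinearMap.quotKerEquivRange φ).symm,
      modLength_quotient]
  rw [← WithBot.coe_le_coe, hrange, WithBot.coe_le_coe]
  have h1 : 1 ≤ Order.height (LinearMap.ker φ) := by
    rw [ENat.one_le_iff_ne_zero]
    intro h0
    exact hker (by simpa [isMin_iff_eq_bot] using Order.height_eq_zero.mp h0)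
  have hd := Order.krullDim_eq_iSup_height_add_coheight_of_nonempty (α := Submodule R A)
  rw [modLength, hd] at hA
  have hle : (((Order.height (LinearMap.ker φ) + Order.coheight (LinearMap.ker φ)) : ℕ∞) : WithBot ℕ∞)
      ≤ (((c + 1 : ℕ) : ℕ∞) : WithBot ℕ∞) := by
    refine le_trans (WithBot.coe_le_coe.mpr (le_iSup
      (fun N : Submodule R A => Order.height N + Order.coheight N) (LinearMap.ker φ))) ?_
    exact_mod_cast hA
  have hsum := WithBot.coe_le_coe.mp hle
  have h2 : Order.coheight (LinearMap.ker φ) + 1 ≤ ((c : ℕ) : ℕ∞) + 1 := by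
    calc Order.coheight (LinearMap.ker φ) + 1
        ≤ Order.coheight (LinearMap.ker φ) + Order.height (LinearMap.ker φ) := by gcongr
      _ = Order.height (LinearMap.ker φ) + Order.coheight (LinearMap.ker φ) := add_comm _ _
      _ ≤ ((c + 1 : ℕ) : ℕ∞) := hsum
      _ = ((c : ℕ) : ℕ∞) + 1 := by push_cast; ring
  exact (WithTop.add_le_add_iff_right (by simp : (1:ℕ∞) ≠ ⊤)).mp h2

/-- The key step of the Harada–Sai induction. -/
lemma harada_key_step {N N' P Q : Type v} [AddCommGroup N] [Module R N]
    [AddCommGroup N'] [Module R N'] [AddCommGroup P] [Module R P]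
    [AddCommGroup Q] [Module R Q]
    (g : Q →ₗ[R] N) (fm : N →ₗ[R] N') (h : N' →ₗ[R] P)
    (hN : Indec R N) (hN' : Indec R N') (c : ℕ)
    (hg : Order.height (LinearMap.range g) ≤ ((c + 1 : ℕ) : ℕ∞))
    (hh : Order.height (LinearMap.range h) ≤ ((c + 1 : ℕ) : ℕ∞))
    (hW : ¬ Order.height (LinearMap.range ((h ∘ₗ fm) ∘ₗ g)) ≤ ((c : ℕ) : ℕ∞)) :
    Function.Bijective fm := by
  have e2 : LinearMap.range ((h ∘ₗ fm) ∘ₗ g)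
      = Submodule.map (h ∘ₗ fm) (LinearMap.range g) := LinearMap.range_comp _ _
  have hWle : Order.height (LinearMap.range ((h ∘ₗ fm) ∘ₗ g)) ≤ ((c + 1 : ℕ) : ℕ∞) := by
    rw [e2]
    exact le_trans (height_map_le _ _) hg
  have hWeq : Order.height (LinearMap.range ((h ∘ₗ fm) ∘ₗ g)) = ((c + 1 : ℕ) : ℕ∞) := by
    refine le_antisymm hWle ?_
    have hlt := not_le.mp hW
    have h2 := (ENat.add_one_le_iff (by simp : ((c : ℕ) : ℕ∞) ≠ ⊤)).mpr hlt
    exact_mod_cast h2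
  have hWY : LinearMap.range ((h ∘ₗ fm) ∘ₗ g) ≤ LinearMap.range h :=
    LinearMap.range_comp_le_range (fm ∘ₗ g) h
  have hYW : LinearMap.range h = LinearMap.range ((h ∘ₗ fm) ∘ₗ g) := by
    by_contra hne
    have hlt : LinearMap.range ((h ∘ₗ fm) ∘ₗ g) < LinearMap.range h :=
      lt_of_le_of_ne hWY (fun e => hne e.symm)
    have hfin : Order.height (LinearMap.range ((h ∘ₗ fm) ∘ₗ g)) < ⊤ := by
      rw [hWeq]; exact_mod_cast ENat.coe_lt_top _
    have hlt2 := Order.height_strictMono hlt hfin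
    rw [hWeq] at hlt2
    exact absurd (lt_of_lt_of_le hlt2 hh) (lt_irrefl _)
  have hφrange : LinearMap.range ((h ∘ₗ fm) ∘ₗ (LinearMap.range g).subtype)
      = LinearMap.range ((h ∘ₗ fm) ∘ₗ g) := by
    rw [LinearMap.range_comp, Submodule.range_subtype, e2]
  have hφker : LinearMap.ker ((h ∘ₗ fm) ∘ₗ (LinearMap.range g).subtype) = ⊥ := by
    by_contra hne
    have hGlen : modLength R (LinearMap.range g) ≤ ((c + 1 : ℕ) : WithBot ℕ∞) := by
      rw [modLength_submodule]
      exact_mod_cast WithBot.coe_le_coe.mpr hg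
    have hle := height_range_of_ker_ne_bot _ hne c hGlen
    rw [hφrange] at hle
    exact hW hle
  have hφinj : Function.Injective ((h ∘ₗ fm) ∘ₗ (LinearMap.range g).subtype) :=
    LinearMap.ker_eq_bot.mp hφker
  have key : ∀ y : N, ∀ hy : y ∈ LinearMap.range g, h (fm y) = 0 → y = 0 := by
    intro y hy h0
    have h1 : ((h ∘ₗ fm) ∘ₗ (LinearMap.range g).subtype) ⟨y, hy⟩
        = ((h ∘ₗ fm) ∘ₗ (LinearMap.range g).subtype) 0 := by
      rw [map_zero]; exact h0
    exact congrArg Subtype.val (hφinj h1)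
  have hdis2 : Disjoint (LinearMap.range g) (LinearMap.ker (h ∘ₗ fm)) := by
    rw [disjoint_iff, eq_bot_iff]
    intro x hx
    rw [Submodule.mem_inf] at hx
    exact (Submodule.mem_bot R).mpr (key x hx.1 hx.2)
  have hX : LinearMap.range (h ∘ₗ fm) = LinearMap.range ((h ∘ₗ fm) ∘ₗ g) := by
    apply le_antisymm
    · exact hYW ▸ LinearMap.range_comp_le_range fm h
    · exact LinearMap.range_comp_le_range g (h ∘ₗ fm)
  have hcod2 : Codisjoint (LinearMap.range g) (LinearMap.ker (h ∘ₗ fm)) := by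
    rw [codisjoint_iff, eq_top_iff]
    intro x _
    have hx : (h ∘ₗ fm) x ∈ LinearMap.range ((h ∘ₗ fm) ∘ₗ g) :=
      hX ▸ LinearMap.mem_range_self _ x
    obtain ⟨m, hm⟩ := hx
    refine Submodule.mem_sup.mpr ⟨g m, LinearMap.mem_range_self g m, x - g m, ?_, by abel⟩
    rw [LinearMap.mem_ker, map_sub, sub_eq_zero]
    exact hm.symm
  have hGne : LinearMap.range g ≠ ⊥ := by
    intro hGbot
    rw [e2, hGbot, Submodule.map_bot, Order.height_bot] at hWeq
    exact absurd hWeq.symm (by exact_mod_cast Nat.succ_ne_zero c)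
  have hker2 : LinearMap.ker (h ∘ₗ fm) = ⊥ :=
    ((hN.2 (LinearMap.range g) (LinearMap.ker (h ∘ₗ fm)) ⟨hdis2, hcod2⟩).resolve_left hGne)
  have hfminj : Function.Injective fm := by
    have h1 : Function.Injective (h ∘ₗ fm) := LinearMap.ker_eq_bot.mp hker2
    rw [LinearMap.coe_comp] at h1
    exact Function.Injective.of_comp h1
  have hdisU : Disjoint (Submodule.map fm (LinearMap.range g)) (LinearMap.ker h) := by
    rw [disjoint_iff, eq_bot_iff]
    intro x hx
    rw [Submodule.mem_inf] at hx
    obtain ⟨y, hy, rfl⟩ := Submodule.mem_map.mp hx.1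
    have hk : h (fm y) = 0 := hx.2
    rw [Submodule.mem_bot, key y hy hk, map_zero]
  have hcodU : Codisjoint (Submodule.map fm (LinearMap.range g)) (LinearMap.ker h) := by
    rw [codisjoint_iff, eq_top_iff]
    intro x _
    have hx : h x ∈ LinearMap.range ((h ∘ₗ fm) ∘ₗ g) := hYW ▸ LinearMap.mem_range_self h x
    obtain ⟨m, hm⟩ := hx
    refine Submodule.mem_sup.mpr ⟨fm (g m),
      Submodule.mem_map_of_mem (LinearMap.mem_range_self g m), x - fm (g m), ?_, by abel⟩
    rw [LinearMap.mem_ker, map_sub, sub_eq_zero]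
    exact hm.symm
  have hUne : Submodule.map fm (LinearMap.range g) ≠ ⊥ := by
    intro hUbot
    have hWbot : LinearMap.range ((h ∘ₗ fm) ∘ₗ g) = ⊥ := by
      rw [e2, Submodule.map_comp, hUbot, Submodule.map_bot]
    rw [hWbot, Order.height_bot] at hWeq
    exact absurd hWeq.symm (by exact_mod_cast Nat.succ_ne_zero c)
  have hkerh : LinearMap.ker h = ⊥ :=
    ((hN'.2 (Submodule.map fm (LinearMap.range g)) (LinearMap.ker h)
      ⟨hdisU, hcodU⟩).resolve_left hUne)
  have hinjh : Function.Injective h := LinearMap.ker_eq_bot.mp hkerh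
  have hsurj : Function.Surjective fm := by
    have hmeq : Submodule.map h (LinearMap.range (fm ∘ₗ g)) = Submodule.map h ⊤ := by
      rw [Submodule.map_top, ← LinearMap.range_comp]
      exact hYW.symm
    have htop : LinearMap.range (fm ∘ₗ g) = ⊤ :=
      Submodule.map_injective_of_injective hinjh hmeq
    rw [← LinearMap.range_eq_top]
    exact top_unique (htop ▸ LinearMap.range_comp_le_range g fm)
  exact ⟨hfminj, hsurj⟩

end modules

/-- The Harada–Sai induction: the composite of a chain of `2^k - 1` non-isomorphisms
between indecomposable modules of length at most `b` has image of length at most `b - k`. -/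
theorem harada_aux (R : Type u) [Ring R] (b : ℕ) (k : ℕ) : k ≤ b →
    ∀ (s : ℕ), s = 2^k - 1 → ∀ (M : Fin (s + 1) → ModuleCat.{u} R)
      (f : ∀ i : Fin s, (M i.castSucc : Type u) →ₗ[R] M i.succ),
      (∀ i, Indec R (M i)) →
      (∀ i, modLength R (M i) ≤ ((b : ℕ∞) : WithBot ℕ∞)) →
      (∀ i, ¬ Function.Bijective (f i)) →
      Order.height (LinearMap.range (compChain R M f)) ≤ ((b - k : ℕ) : ℕ∞) := by
  induction k with
  | zero =>
    intro _ s hs M f hind hlen hnoiso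
    obtain rfl : s = 0 := by rw [pow_zero] at hs; omega
    have h0 : compChain R M f = LinearMap.id := rfl
    rw [h0, LinearMap.range_id]
    have hl := hlen 0
    rw [modLength, ← Order.height_top_eq_krullDim] at hl
    simpa using WithBot.coe_le_coe.mp hl
  | succ k IH =>
    intro hk s hs M f hind hlen hnoiso
    have hpow : 2^(k+1) = 2^k + 2^k := by rw [pow_succ]; ring
    have hone : 1 ≤ 2^k := Nat.one_le_two_pow
    obtain rfl : s = (2^k - 1 + 1) + (2^k - 1) := by omega
    by_contra hcon
    have hbk : b - k = (b - (k+1)) + 1 := by omega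
    have hT : compChain R M f =
        ((compChain R (fun t : Fin (2^k - 1 + 1) => M ⟨(2^k - 1 + 1) + t.val, by omega⟩)
            (fun t : Fin (2^k - 1) => f ⟨(2^k - 1 + 1) + t.val, by omega⟩))
          ∘ₗ (f ⟨2^k - 1, by omega⟩)) ∘ₗ
          (compChain R (fun t : Fin (2^k - 1 + 1) => M ⟨t.val, by omega⟩)
            (fun t : Fin (2^k - 1) => f ⟨t.val, by omega⟩)) := by
      rw [compChain_split R (2^k - 1 + 1) (2^k - 1) M f]
      rfl
    rw [hT] at hcon
    have hg := IH (by omega) (2^k - 1) rfl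
      (fun t : Fin (2^k - 1 + 1) => M ⟨t.val, by omega⟩)
      (fun t : Fin (2^k - 1) => f ⟨t.val, by omega⟩)
      (fun t => hind ⟨t.val, by omega⟩) (fun t => hlen ⟨t.val, by omega⟩)
      (fun t => hnoiso ⟨t.val, by omega⟩)
    have hh := IH (by omega) (2^k - 1) rfl
      (fun t : Fin (2^k - 1 + 1) => M ⟨(2^k - 1 + 1) + t.val, by omega⟩)
      (fun t : Fin (2^k - 1) => f ⟨(2^k - 1 + 1) + t.val, by omega⟩)
      (fun t => hind ⟨(2^k - 1 + 1) + t.val, by omega⟩)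
      (fun t => hlen ⟨(2^k - 1 + 1) + t.val, by omega⟩)
      (fun t => hnoiso ⟨(2^k - 1 + 1) + t.val, by omega⟩)
    rw [hbk] at hg hh
    exact hnoiso ⟨2^k - 1, by omega⟩
      (harada_key_step
        (compChain R (fun t : Fin (2^k - 1 + 1) => M ⟨t.val, by omega⟩)
          (fun t : Fin (2^k - 1) => f ⟨t.val, by omega⟩))
        (f ⟨2^k - 1, by omega⟩)
        (compChain R (fun t : Fin (2^k - 1 + 1) => M ⟨(2^k - 1 + 1) + t.val, by omega⟩)
          (fun t : Fin (2^k - 1) => f ⟨(2^k - 1 + 1) + t.val, by omega⟩))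
        (hind ⟨2^k - 1, by omega⟩) (hind ⟨2^k - 1 + 1, by omega⟩)
        (b - (k+1)) hg hh hcon)

end HaradaSaiAux


/-- **Harada–Sai Lemma.**  Let `R` be a ring and `M 0 → M 1 → ⋯ → M s` a sequence of
`R`-homomorphisms such that each `M i` is indecomposable of finite length `≤ b`, no
`f i` is an isomorphism, and the composite is non-zero.  Then the number of modules in
the chain is at most `2^b - 1`. -/
theorem stmt_10 (R : Type u) [Ring R] (b s : ℕ)
    (M : Fin (s + 1) → ModuleCat.{u} R)
    (f : ∀ i : Fin s, (M i.castSucc : Type u) →ₗ[R] M i.succ)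
    (hind : ∀ i, Indec R (M i))
    (hlen : ∀ i, modLength R (M i) ≤ ((b : ℕ∞) : WithBot ℕ∞))
    (hnoiso : ∀ i, ¬ Function.Bijective (f i))
    (hcomp : compChain R M f ≠ 0) :
    s + 1 ≤ 2 ^ b - 1 := by
  by_contra hcon
  have hone : 1 ≤ 2^b := Nat.one_le_two_pow
  obtain ⟨c, rfl⟩ : ∃ c, s = (2^b - 1) + c := ⟨s - (2^b - 1), by omega⟩
  have p1 : ∀ t : Fin (2^b - 1 + 1), (t : ℕ) < (2^b - 1) + c + 1 := fun t => by omega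
  have p2 : ∀ t : Fin (2^b - 1), (t : ℕ) < (2^b - 1) + c := fun t => by omega
  have haux := harada_aux R b b le_rfl (2^b - 1) rfl
    (fun t => M ⟨t.val, p1 t⟩) (fun t => f ⟨t.val, p2 t⟩)
    (fun t => hind ⟨t.val, p1 t⟩) (fun t => hlen ⟨t.val, p1 t⟩)
    (fun t => hnoiso ⟨t.val, p2 t⟩)
  have h0 : Order.height (LinearMap.range (compChain R
      (fun t => M ⟨t.val, p1 t⟩) (fun t => f ⟨t.val, p2 t⟩))) = 0 :=
    le_antisymm (by simpa using haux) zero_le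
  have hzero : compChain R (fun t => M ⟨t.val, p1 t⟩) (fun t => f ⟨t.val, p2 t⟩) = 0 :=
    LinearMap.range_eq_bot.mp (isMin_iff_eq_bot.mp (Order.height_eq_zero.mp h0))
  apply hcomp
  have hsplit : compChain R M f =
      (compChain R (fun t : Fin (c+1) => M ⟨(2^b - 1) + t.val, by omega⟩)
        (fun t : Fin c => f ⟨(2^b - 1) + t.val, by omega⟩)) ∘ₗ
      (compChain R (fun t => M ⟨t.val, p1 t⟩) (fun t => f ⟨t.val, p2 t⟩)) :=
    compChain_split R (2^b - 1) c M f
  rw [hsplit, hzero]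
  exact LinearMap.comp_zero _


end
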